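/- arXiv:1806.09600 — 3 statements merged into one kernel-verified Lean document; each statement's English description precedes it below -/
import Mathlib

section
/- Let n be a nonnegative integer. Then v_p(B_n) ≥ -1 for every prime p, where B_n is the n-th Bernoulli number and v_p is the p-adic valuation. -/
open Finset

lemma padicNorm_pow' (p : ℕ) [Fact p.Prime] (x : ℚ) (m : ℕ) :
    padicNorm p (x ^ m) = padicNorm p x ^ m := by
  induction m with
  | zero => simp [padicNorm.one]
  | succ k ih => rw [pow_succ, pow_succ, padicNorm.mul, ih]

lemma aux_norm_pow_div (p m : ℕ) (hp : p.Prime) (hm : 0 < m) :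
    padicNorm p ((p : ℚ) ^ m / m) ≤ (p : ℚ)⁻¹ := by
  haveI := Fact.mk hp
  have hm0 : (m : ℚ) ≠ 0 := Nat.cast_ne_zero.mpr hm.ne'
  have hp0 : (0 : ℚ) < p := by exact_mod_cast hp.pos
  have hp1 : (1 : ℚ) < p := by exact_mod_cast hp.one_lt
  have hv : padicValNat p m < m := by
    have h1 : p ^ padicValNat p m ≤ m := Nat.le_of_dvd hm pow_padicValNat_dvd
    have h2 : m < p ^ m := Nat.lt_pow_self hp.one_lt
    exact (Nat.pow_lt_pow_iff_right hp.one_lt).mp (lt_of_le_of_lt h1 h2)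
  rw [padicNorm.div, padicNorm_pow', padicNorm.padicNorm_p_of_prime,
    padicNorm.eq_zpow_of_nonzero hm0, padicValRat.of_nat]
  rw [div_le_iff₀ (by positivity)]
  calc ((p:ℚ)⁻¹) ^ m = (p:ℚ) ^ (-(m:ℤ)) := by
        rw [zpow_neg, zpow_natCast, inv_pow]
    _ ≤ (p:ℚ)⁻¹ * (p:ℚ) ^ (-(padicValNat p m : ℤ)) := by
        rw [← zpow_neg_one, ← zpow_add₀ hp0.ne']
        exact zpow_le_zpow_right₀ hp1.le (by omega)

/-- Key lemma: `padicNorm p (bernoulli n) ≤ p`. -/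
lemma bernoulli_padicNorm_le (p : ℕ) (hp : p.Prime) : ∀ n, padicNorm p (bernoulli n) ≤ p := by
  haveI := Fact.mk hp
  have hp0 : (0 : ℚ) < p := by exact_mod_cast hp.pos
  have hp1 : (1 : ℚ) < p := by exact_mod_cast hp.one_lt
  intro n
  induction n using Nat.strong_induction_on with
  | _ n ih =>
    have hF := sum_range_pow p n
    rw [Finset.sum_range_succ] at hF
    have hn1 : (n : ℚ) + 1 ≠ 0 := by positivity
    have hlast : bernoulli n * ((n + 1).choose n) * (p : ℚ) ^ (n + 1 - n) / ((n : ℚ) + 1)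
        = bernoulli n * p := by
      rw [Nat.choose_succ_self_right, show n + 1 - n = 1 by omega, pow_one]
      push_cast
      field_simp
    rw [hlast] at hF
    have key : bernoulli n * p
        = (∑ k ∈ range p, (k : ℚ) ^ n)
          - ∑ i ∈ range n, bernoulli i * ((n + 1).choose i) * (p:ℚ) ^ (n + 1 - i) / ((n:ℚ) + 1) := by
      rw [hF]; ring
    have hS : padicNorm p (∑ k ∈ range p, (k : ℚ) ^ n) ≤ 1 := by
      have hc : (∑ k ∈ range p, (k : ℚ) ^ n) = ((∑ k ∈ range p, k ^ n : ℕ) : ℚ) := by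
        push_cast; rfl
      rw [hc]; exact padicNorm.of_nat _
    have hterm : ∀ i ∈ range n,
        padicNorm p (bernoulli i * ((n + 1).choose i) * (p:ℚ) ^ (n + 1 - i) / ((n:ℚ) + 1)) ≤ 1 := by
      intro i hi
      have hin : i < n := mem_range.mp hi
      have hmi : 0 < n + 1 - i := by omega
      have hmq : ((n + 1 - i : ℕ) : ℚ) ≠ 0 := Nat.cast_ne_zero.mpr hmi.ne'
      -- the binomial identity (n+1).choose i * (n+1-i) = (n+1) * n.choose i
      have e1 := Nat.add_one_mul_choose_eq n (n - i)
      rw [Nat.choose_symm hin.le, show n - i + 1 = n + 1 - i by omega,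
        Nat.choose_symm (show i ≤ n + 1 by omega)] at e1
      -- rewrite the term
      have hid : bernoulli i * ((n + 1).choose i) * (p:ℚ) ^ (n + 1 - i) / ((n:ℚ) + 1)
          = bernoulli i * (n.choose i) * ((p:ℚ) ^ (n + 1 - i) / ((n + 1 - i : ℕ) : ℚ)) := by
        have e1q : ((n:ℚ) + 1) * (n.choose i) = ((n + 1).choose i : ℚ) * ((n + 1 - i : ℕ) : ℚ) := by
          exact_mod_cast congrArg (Nat.cast : ℕ → ℚ) e1
        field_simp
        linear_combination (-bernoulli i) * e1q
      rw [hid, padicNorm.mul, padicNorm.mul]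
      have h1 : padicNorm p (bernoulli i) ≤ p := ih i hin
      have h2 : padicNorm p ((n.choose i : ℚ)) ≤ 1 := padicNorm.of_nat _
      have h3 : padicNorm p ((p:ℚ) ^ (n + 1 - i) / ((n + 1 - i : ℕ) : ℚ)) ≤ (p:ℚ)⁻¹ :=
        aux_norm_pow_div p (n + 1 - i) hp hmi
      calc padicNorm p (bernoulli i) * padicNorm p ((n.choose i : ℚ))
            * padicNorm p ((p:ℚ) ^ (n + 1 - i) / ((n + 1 - i : ℕ) : ℚ))
          ≤ (p : ℚ) * 1 * (p : ℚ)⁻¹ := by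
            apply mul_le_mul _ h3 (padicNorm.nonneg _) (by positivity)
            exact mul_le_mul h1 h2 (padicNorm.nonneg _) hp0.le
        _ = 1 := by field_simp
    have hsum : padicNorm p (∑ i ∈ range n,
        bernoulli i * ((n + 1).choose i) * (p:ℚ) ^ (n + 1 - i) / ((n:ℚ) + 1)) ≤ 1 :=
      padicNorm.sum_le' hterm zero_le_one
    have hBp : padicNorm p (bernoulli n * p) ≤ 1 := by
      rw [key]
      exact le_trans padicNorm.sub (max_le hS hsum)
    rw [padicNorm.mul, padicNorm.padicNorm_p_of_prime] at hBp
    calc padicNorm p (bernoulli n)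
        = padicNorm p (bernoulli n) * (p:ℚ)⁻¹ * p := by field_simp
      _ ≤ 1 * p := by
          apply mul_le_mul_of_nonneg_right hBp hp0.le
      _ = p := one_mul _

/-- Von Staudt–Clausen consequence: `v_p(B_n) ≥ -1` for every prime `p`. -/
theorem bernoulli_padic_valuation (p n : ℕ) (hp : p.Prime) :
    (-1 : ℤ) ≤ padicValRat p (bernoulli n) := by
  haveI := Fact.mk hp
  by_cases h0 : bernoulli n = 0
  · rw [h0, padicValRat.zero]; norm_num
  · have h := bernoulli_padicNorm_le p hp n
    rw [padicNorm.eq_zpow_of_nonzero h0] at h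
    have hp1 : (1 : ℚ) < p := by exact_mod_cast hp.one_lt
    have : (p : ℚ) ^ (-padicValRat p (bernoulli n)) ≤ (p : ℚ) ^ (1 : ℤ) := by
      rwa [zpow_one]
    have := (zpow_le_zpow_iff_right₀ hp1).mp this
    omega
end

section
/- Let r ≥ 1. For every triple J = (P_1, P_2, P_3) of pairwise disjoint sets with P_1 ∪ P_2 ∪ P_3 = {1,...,r}, and every prime p and integer M ≥ 1, define U_{r,p^M,J} = {(u_1,...,u_r) ∈ [0, r·p^{M-1} - 1]^r : u_{i-1} = u_i if i ∈ P_1; u_{i-1} < u_i < u_{i-1} + p^{M-1} if i ∈ P_2; u_i = u_{i-1} + p^{M-1} if i ∈ P_3} (with u_0 = 0), and T_{r,J} = {(t_1,...,t_r) ∈ [1, p-1]^r : t_{i-1} ≤ t_i if i ∈ P_1; t_{i-1} > t_i if i ∈ P_3} (with t_0 = 0). Then the map div sending (x_1,...,x_r) to ((u_1,...,u_r),(t_1,...,t_r)) given by the Euclidean divisions x_1+...+x_i = u_i·p + t_i restricts to a bijection from D_{r,p^M} = {(x_i) ∈ [0,p^M-1]^r : p ∤ x_1+...+x_i for all i} onto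 the disjoint union over all such J of U_{r,p^M,J} × T_{r,J}. -/
/-- `u_{i-1}` with the convention `u_0 = 0`. -/
def prevOr0 {r : ℕ} (u : Fin r → ℕ) (i : Fin r) : ℕ :=
  if h : 0 < (i : ℕ) then u ⟨(i : ℕ) - 1, lt_of_le_of_lt (Nat.sub_le _ _) i.isLt⟩ else 0

/-- The condition defining `U_{r,p^M,J}` for an ordered partition `π : Fin r → Fin 3`
(`π i = 0, 1, 2` meaning `i ∈ P_1, P_2, P_3` respectively). -/
def UCond (p M r : ℕ) (π : Fin r → Fin 3) (u : Fin r → ℕ) : Prop :=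
  ∀ i : Fin r, u i ≤ r * p ^ (M - 1) - 1 ∧
    (π i = 0 → prevOr0 u i = u i) ∧
    (π i = 1 → prevOr0 u i < u i ∧ u i < prevOr0 u i + p ^ (M - 1)) ∧
    (π i = 2 → u i = prevOr0 u i + p ^ (M - 1))

/-- The condition defining `T_{r,J}` for an ordered partition `π : Fin r → Fin 3`. -/
def TCond (p r : ℕ) (π : Fin r → Fin 3) (t : Fin r → ℕ) : Prop :=
  ∀ i : Fin r, (1 ≤ t i ∧ t i ≤ p - 1) ∧
    (π i = 0 → prevOr0 t i ≤ t i) ∧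
    (π i = 2 → t i < prevOr0 t i)

/-- The map `div` of the paper, together with the classifier recording to which part
`P_1, P_2, P_3` each index belongs: `x ↦ (J, (u_i), (t_i))` where
`x_1+⋯+x_i = u_i·p + t_i`. -/
def divMap (p M r : ℕ) (x : Fin r → ℕ) :
    (Fin r → Fin 3) × ((Fin r → ℕ) × (Fin r → ℕ)) :=
  let u : Fin r → ℕ := fun i => (∑ j ∈ Finset.Iic i, x j) / p
  let t : Fin r → ℕ := fun i => (∑ j ∈ Finset.Iic i, x j) % p
  (fun i => if prevOr0 u i = u i then 0
    else if u i = prevOr0 u i + p ^ (M - 1) then 2 else 1, u, t)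

lemma prevOr0_mul_add {r : ℕ} (u t : Fin r → ℕ) (p : ℕ) (i : Fin r) :
    prevOr0 (fun j => u j * p + t j) i = prevOr0 u i * p + prevOr0 t i := by
  unfold prevOr0; split <;> simp

lemma sum_Iic_rec {r : ℕ} (x : Fin r → ℕ) (i : Fin r) :
    ∑ j ∈ Finset.Iic i, x j = prevOr0 (fun j => ∑ k ∈ Finset.Iic j, x k) i + x i := by
  unfold prevOr0
  split
  next h =>
    have hins : Finset.Iic i
        = insert i (Finset.Iic (⟨(i : ℕ) - 1, lt_of_le_of_lt (Nat.sub_le _ _) i.isLt⟩ : Fin r)) := by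
      ext j
      simp only [Finset.mem_Iic, Finset.mem_insert, Fin.le_def, Fin.ext_iff]
      omega
    rw [hins, Finset.sum_insert (by simp [Fin.le_def]; omega), add_comm]
  next h =>
    have : Finset.Iic i = {i} := by
      ext j
      simp only [Finset.mem_Iic, Finset.mem_singleton, Fin.le_def, Fin.ext_iff]
      omega
    simp [this]

lemma fin3_cases (a : Fin 3) : a = 0 ∨ a = 1 ∨ a = 2 := by revert a; decide

lemma core (p q s' a : ℕ) (hp2 : 2 ≤ p) (hq1 : 1 ≤ q) (ha : a ≤ q * p - 1)
    (hnd : ¬ p ∣ (s' + a)) :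
    (s' / p = (s' + a) / p → s' % p ≤ (s' + a) % p) ∧
    ((s' + a) / p = s' / p + q → (s' + a) % p < s' % p) ∧
    (¬ s' / p = (s' + a) / p → ¬ (s' + a) / p = s' / p + q →
       s' / p < (s' + a) / p ∧ (s' + a) / p < s' / p + q) ∧
    (1 ≤ (s' + a) % p ∧ (s' + a) % p ≤ p - 1) := by
  have hp0 : 0 < p := by omega
  have hqp1 : 1 ≤ q * p := Nat.mul_pos (by omega) hp0
  have e1 : (s' + a) / p * p + (s' + a) % p = s' + a := by
    rw [mul_comm]; exact Nat.div_add_mod _ p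
  have e2 : s' / p * p + s' % p = s' := by rw [mul_comm]; exact Nat.div_add_mod _ p
  have l1 : (s' + a) % p < p := Nat.mod_lt _ hp0
  have l2 : s' % p < p := Nat.mod_lt _ hp0
  have l3 : (s' + a) % p ≠ 0 := fun h => hnd (Nat.dvd_of_mod_eq_zero h)
  refine ⟨?_, ?_, ?_, by omega⟩
  · intro h
    have hm : s' / p * p = (s' + a) / p * p := by rw [h]
    omega
  · intro h
    have hm : (s' + a) / p * p = s' / p * p + q * p := by rw [h, add_mul]
    omega
  · intro h1 h2
    constructor
    · by_contra hc
      push_neg at hc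
      have hle : (s' + a) / p + 1 ≤ s' / p := by omega
      have hm : ((s' + a) / p + 1) * p ≤ s' / p * p := mul_le_mul_left hle p
      rw [add_mul, one_mul] at hm
      omega
    · by_contra hc
      push_neg at hc
      have hle : s' / p + q + 1 ≤ (s' + a) / p := by omega
      have hm : (s' / p + q + 1) * p ≤ (s' + a) / p * p := mul_le_mul_left hle p
      rw [add_mul, add_mul, one_mul] at hm
      omega

/-- Lemma 2.2 of the paper: `div` restricts to a bijection from
`D_{r,p^M} = {x ∈ [0,p^M-1]^r : p ∤ x_1+⋯+x_i}` onto the disjoint union, over ordered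
partitions `J = (P_1,P_2,P_3)` of `{1,…,r}`, of `U_{r,p^M,J} × T_{r,J}`. -/
theorem divMap_bijOn (p M r : ℕ) (hp : p.Prime) (hM : 0 < M) (hr : 0 < r) :
    Set.BijOn (divMap p M r)
      {x : Fin r → ℕ | (∀ i, x i ≤ p ^ M - 1) ∧
        ∀ i : Fin r, ¬ p ∣ ∑ j ∈ Finset.Iic i, x j}
      {z : (Fin r → Fin 3) × ((Fin r → ℕ) × (Fin r → ℕ)) |
        UCond p M r z.1 z.2.1 ∧ TCond p r z.1 z.2.2} := by
  have hp2 := hp.two_le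
  have hp0 : 0 < p := by omega
  have hq1 : 1 ≤ p ^ (M - 1) := Nat.one_le_pow _ _ hp0
  have hqp : p ^ (M - 1) * p = p ^ M := by rw [← pow_succ]; congr 1; omega
  have hqp1 : 1 ≤ p ^ (M - 1) * p := Nat.mul_pos (by omega) hp0
  have hqpp : p ≤ p ^ (M - 1) * p := by
    calc p = 1 * p := (one_mul p).symm
      _ ≤ _ := mul_le_mul_left hq1 p
  refine ⟨?_, ?_, ?_⟩
  · -- MapsTo
    rintro x ⟨hx, hnd⟩
    have hcompd : ∀ i : Fin r, prevOr0 (fun j : Fin r => (∑ k ∈ Finset.Iic j, x k) / p) i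
        = (prevOr0 (fun j : Fin r => ∑ k ∈ Finset.Iic j, x k) i) / p := by
      intro i; unfold prevOr0; split <;> simp
    have hcompm : ∀ i : Fin r, prevOr0 (fun j : Fin r => (∑ k ∈ Finset.Iic j, x k) % p) i
        = (prevOr0 (fun j : Fin r => ∑ k ∈ Finset.Iic j, x k) i) % p := by
      intro i; unfold prevOr0; split <;> simp
    have hcore : ∀ i : Fin r,
        ((prevOr0 (fun j : Fin r => ∑ k ∈ Finset.Iic j, x k) i) / p
            = (∑ j ∈ Finset.Iic i, x j) / p →
          (prevOr0 (fun j : Fin r => ∑ k ∈ Finset.Iic j, x k) i) % p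
            ≤ (∑ j ∈ Finset.Iic i, x j) % p) ∧
        ((∑ j ∈ Finset.Iic i, x j) / p
            = (prevOr0 (fun j : Fin r => ∑ k ∈ Finset.Iic j, x k) i) / p + p ^ (M - 1) →
          (∑ j ∈ Finset.Iic i, x j) % p
            < (prevOr0 (fun j : Fin r => ∑ k ∈ Finset.Iic j, x k) i) % p) ∧
        (¬ (prevOr0 (fun j : Fin r => ∑ k ∈ Finset.Iic j, x k) i) / p
            = (∑ j ∈ Finset.Iic i, x j) / p →
         ¬ (∑ j ∈ Finset.Iic i, x j) / p
            = (prevOr0 (fun j : Fin r => ∑ k ∈ Finset.Iic j, x k) i) / p + p ^ (M - 1) →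
          (prevOr0 (fun j : Fin r => ∑ k ∈ Finset.Iic j, x k) i) / p
              < (∑ j ∈ Finset.Iic i, x j) / p ∧
            (∑ j ∈ Finset.Iic i, x j) / p
              < (prevOr0 (fun j : Fin r => ∑ k ∈ Finset.Iic j, x k) i) / p + p ^ (M - 1)) ∧
        (1 ≤ (∑ j ∈ Finset.Iic i, x j) % p ∧ (∑ j ∈ Finset.Iic i, x j) % p ≤ p - 1) := by
      intro i
      have hrec := sum_Iic_rec x i
      have h := core p (p ^ (M - 1))
        (prevOr0 (fun j : Fin r => ∑ k ∈ Finset.Iic j, x k) i) (x i) hp2 hq1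
        (by have := hx i; omega) (by rw [← hrec]; exact hnd i)
      rw [← hrec] at h
      exact h
    have hbound : ∀ i : Fin r, (∑ j ∈ Finset.Iic i, x j) / p ≤ r * p ^ (M - 1) - 1 := by
      intro i
      have hsum_le : ∑ j ∈ Finset.Iic i, x j ≤ ((i : ℕ) + 1) * (p ^ M - 1) := by
        have h0 := Finset.sum_le_card_nsmul (Finset.Iic i) x (p ^ M - 1) (fun j _ => hx j)
        simpa using h0
      have hcard : (i : ℕ) + 1 ≤ r := i.isLt
      have hlt : ∑ j ∈ Finset.Iic i, x j < r * (p ^ (M - 1) * p) := by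
        calc ∑ j ∈ Finset.Iic i, x j ≤ ((i : ℕ) + 1) * (p ^ M - 1) := hsum_le
          _ ≤ r * (p ^ M - 1) := mul_le_mul_left hcard _
          _ < r * (p ^ (M - 1) * p) := mul_lt_mul_of_pos_left (by omega) hr
      have hdlt : (∑ j ∈ Finset.Iic i, x j) / p < r * p ^ (M - 1) := by
        rw [Nat.div_lt_iff_lt_mul hp0, mul_assoc]; exact hlt
      have hrq : 1 ≤ r * p ^ (M - 1) := Nat.mul_pos hr (by omega)
      omega
    simp only [Set.mem_setOf_eq, divMap, UCond, TCond]
    constructor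
    · intro i
      obtain ⟨c1, c2, c3, c4⟩ := hcore i
      rw [hcompd i]
      refine ⟨hbound i, ?_, ?_, ?_⟩
      · intro h
        split_ifs at h with h1 h2
        · exact h1
        · exact absurd h (by decide)
        · exact absurd h (by decide)
      · intro h
        split_ifs at h with h1 h2
        · exact absurd h (by decide)
        · exact absurd h (by decide)
        · exact c3 h1 h2
      · intro h
        split_ifs at h with h1 h2
        · exact absurd h (by decide)
        · exact h2
        · exact absurd h (by decide)
    · intro i
      obtain ⟨c1, c2, c3, c4⟩ := hcore i
      rw [hcompd i, hcompm i]
      refine ⟨c4, ?_, ?_⟩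
      · intro h
        split_ifs at h with h1 h2
        · exact c1 h1
        · exact absurd h (by decide)
        · exact absurd h (by decide)
      · intro h
        split_ifs at h with h1 h2
        · exact absurd h (by decide)
        · exact c2 h2
        · exact absurd h (by decide)
  · -- InjOn
    rintro x ⟨hx, hndx⟩ y ⟨hy, hndy⟩ heq
    have hu := congrArg (fun z => z.2.1) heq
    have ht := congrArg (fun z => z.2.2) heq
    simp only [divMap] at hu ht
    have hs : ∀ i : Fin r, ∑ j ∈ Finset.Iic i, x j = ∑ j ∈ Finset.Iic i, y j := by
      intro i
      have hui := congrFun hu i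
      have hti := congrFun ht i
      have d1 : (∑ j ∈ Finset.Iic i, x j) / p * p + (∑ j ∈ Finset.Iic i, x j) % p
          = ∑ j ∈ Finset.Iic i, x j := by rw [mul_comm]; exact Nat.div_add_mod _ p
      have d2 : (∑ j ∈ Finset.Iic i, y j) / p * p + (∑ j ∈ Finset.Iic i, y j) % p
          = ∑ j ∈ Finset.Iic i, y j := by rw [mul_comm]; exact Nat.div_add_mod _ p
      have hm : (∑ j ∈ Finset.Iic i, x j) / p * p = (∑ j ∈ Finset.Iic i, y j) / p * p := by
        rw [hui]
      omega
    funext i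
    have h1 := sum_Iic_rec x i
    have h2 := sum_Iic_rec y i
    have h3 : prevOr0 (fun j : Fin r => ∑ k ∈ Finset.Iic j, x k) i
        = prevOr0 (fun j : Fin r => ∑ k ∈ Finset.Iic j, y k) i := by
      unfold prevOr0
      split
      · exact hs _
      · rfl
    have h4 := hs i
    omega
  · -- SurjOn
    rintro ⟨π, u, t⟩ ⟨hU, hT⟩
    change UCond p M r π u at hU
    change TCond p r π t at hT
    set x : Fin r → ℕ := fun i => (u i * p + t i) - prevOr0 (fun j => u j * p + t j) i
      with hx_def
    have htp : ∀ i, t i < p := fun i => by have := (hT i).1.2; omega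
    have ht1 : ∀ i, 1 ≤ t i := fun i => (hT i).1.1
    have hprev_t : ∀ i : Fin r, prevOr0 t i < p := by
      intro i; unfold prevOr0
      split
      · exact htp _
      · omega
    have mono : ∀ i : Fin r, prevOr0 (fun j => u j * p + t j) i ≤ u i * p + t i := by
      intro i
      rw [prevOr0_mul_add]
      rcases fin3_cases (π i) with h | h | h
      · have h0 := (hU i).2.1 h
        have h1 := (hT i).2.1 h
        have he : prevOr0 u i * p = u i * p := by rw [h0]
        omega
      · have h1 := ((hU i).2.2.1 h).1
        have hm : (prevOr0 u i + 1) * p ≤ u i * p := mul_le_mul_left (by omega) p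
        rw [add_mul, one_mul] at hm
        have := hprev_t i
        omega
      · have h2 := (hU i).2.2.2 h
        have hm : u i * p = prevOr0 u i * p + p ^ (M - 1) * p := by rw [h2, add_mul]
        have := hprev_t i
        have := hqpp
        omega
    have key : ∀ n : ℕ, ∀ i : Fin r, (i : ℕ) = n →
        ∑ j ∈ Finset.Iic i, x j = u i * p + t i := by
      intro n
      induction n using Nat.strong_induction_on with
      | _ n ih =>
        intro i hi
        rw [sum_Iic_rec x i]
        have hprev : prevOr0 (fun j : Fin r => ∑ k ∈ Finset.Iic j, x k) i
            = prevOr0 (fun j => u j * p + t j) i := by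
          unfold prevOr0
          split
          next h => exact ih ((i : ℕ) - 1) (by omega) _ rfl
          next h => rfl
        rw [hprev]
        have hm := mono i
        have hxb : x i = (u i * p + t i) - prevOr0 (fun j => u j * p + t j) i := rfl
        omega
    have keyi : ∀ i : Fin r, ∑ j ∈ Finset.Iic i, x j = u i * p + t i := fun i => key _ i rfl
    have hxmem : x ∈ {x : Fin r → ℕ | (∀ i, x i ≤ p ^ M - 1) ∧
        ∀ i : Fin r, ¬ p ∣ ∑ j ∈ Finset.Iic i, x j} := by
      constructor
      · intro i
        have hm := mono i
        have hq := prevOr0_mul_add u t p i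
        have hxb : x i = (u i * p + t i) - prevOr0 (fun j => u j * p + t j) i := rfl
        have hple : p ≤ p ^ M := Nat.le_self_pow (by omega) p
        have htb := (hT i).1.2
        have hptb := hprev_t i
        rcases fin3_cases (π i) with h | h | h
        · have h0 := (hU i).2.1 h
          have he : prevOr0 u i * p = u i * p := by rw [h0]
          omega
        · have h1 := (hU i).2.2.1 h
          have hm2 : (u i + 1) * p ≤ (prevOr0 u i + p ^ (M - 1)) * p :=
            mul_le_mul_left (by omega) p
          rw [add_mul, one_mul, add_mul] at hm2
          omega
        · have h2 := (hU i).2.2.2 h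
          have h3 := (hT i).2.2 h
          have he : u i * p = prevOr0 u i * p + p ^ (M - 1) * p := by rw [h2, add_mul]
          omega
      · intro i hdvd
        rw [keyi i] at hdvd
        have hpd : p ∣ t i := (Nat.dvd_add_right (dvd_mul_left p (u i))).mp hdvd
        have h1 := Nat.le_of_dvd (by have := ht1 i; omega) hpd
        have h2 := (hT i).1.2
        omega
    refine ⟨x, hxmem, ?_⟩
    have hu' : ∀ i : Fin r, (∑ j ∈ Finset.Iic i, x j) / p = u i := by
      intro i
      rw [keyi i, mul_comm, Nat.mul_add_div hp0, Nat.div_eq_of_lt (htp i), add_zero]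
    have ht' : ∀ i : Fin r, (∑ j ∈ Finset.Iic i, x j) % p = t i := by
      intro i
      rw [keyi i, mul_comm, Nat.mul_add_mod, Nat.mod_eq_of_lt (htp i)]
    have hul : (fun i : Fin r => (∑ j ∈ Finset.Iic i, x j) / p) = u := funext hu'
    refine Prod.ext ?_ (Prod.ext (funext hu') (funext ht'))
    show (fun i : Fin r =>
        if prevOr0 (fun i : Fin r => (∑ j ∈ Finset.Iic i, x j) / p) i
            = (∑ j ∈ Finset.Iic i, x j) / p then (0 : Fin 3)
        else if (∑ j ∈ Finset.Iic i, x j) / p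
            = prevOr0 (fun i : Fin r => (∑ j ∈ Finset.Iic i, x j) / p) i + p ^ (M - 1) then 2
        else 1) = π
    funext i
    rw [hul, hu' i]
    rcases fin3_cases (π i) with h | h | h
    · rw [if_pos ((hU i).2.1 h), h]
    · have h1 := (hU i).2.2.1 h
      rw [if_neg (by omega), if_neg (by omega), h]
    · have h2 := (hU i).2.2.2 h
      rw [if_neg (by omega), if_pos h2, h]
end

section
/- In the base case r = 1 with ε_1 ≠ 1: for any nonnegative integer l and any c-th root of unity ε_1 ≠ 1 (c prime to p), the coefficients B_{l',ξ} in the expansion Σ_{u=0}^{h-1} ε_1^{-u} u^l = Σ_{l',ξ} B_{l',ξ} h^{l'} ξ^h all lie in ℤ[ε_1, ε_1^{-1}, (ε_1-1)^{-1}], and hence have p-adic valuation ≥ 0 for any prime p not dividing c. -/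
open Polynomial Finset

noncomputable def auxQ {K : Type*} [Field K] (x : K) : ℕ → Polynomial K
  | l => Polynomial.C (x - 1)⁻¹ * (Polynomial.X ^ l -
      Polynomial.C x * ∑ j ∈ (Finset.range l).attach,
        Polynomial.C (l.choose j.1 : K) * auxQ x j.1)
  termination_by l => l
  decreasing_by exact Finset.mem_range.mp j.2

lemma auxQ_def {K : Type*} [Field K] (x : K) (l : ℕ) :
    auxQ x l = Polynomial.C (x - 1)⁻¹ * (Polynomial.X ^ l -
      Polynomial.C x * ∑ j ∈ Finset.range l, Polynomial.C (l.choose j : K) * auxQ x j) := by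
  rw [auxQ, ← Finset.sum_attach (Finset.range l) (fun j => Polynomial.C (l.choose j : K) * auxQ x j)]

lemma auxQ_natDegree_le {K : Type*} [Field K] (x : K) (l : ℕ) : (auxQ x l).natDegree ≤ l := by
  induction l using Nat.strong_induction_on with
  | _ l ih =>
    rw [auxQ_def]
    refine le_trans (Polynomial.natDegree_mul_le) ?_
    simp only [Polynomial.natDegree_C, zero_add]
    refine le_trans (Polynomial.natDegree_sub_le _ _) (max_le (by simp) ?_)
    refine le_trans (Polynomial.natDegree_mul_le) ?_
    simp only [Polynomial.natDegree_C, zero_add]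
    refine Polynomial.natDegree_sum_le_of_forall_le _ _ (fun j hj => ?_)
    refine le_trans (Polynomial.natDegree_mul_le) ?_
    simp only [Polynomial.natDegree_C, zero_add]
    exact le_trans (ih j (Finset.mem_range.mp hj)) (Finset.mem_range.mp hj).le

lemma auxQ_coeff_mem {K : Type*} [Field K] (R : Subring K) {x : K} (hx : x ∈ R)
    (hxi : (x - 1)⁻¹ ∈ R) (l i : ℕ) : (auxQ x l).coeff i ∈ R := by
  induction l using Nat.strong_induction_on generalizing i with
  | _ l ih =>
    rw [auxQ_def]
    rw [Polynomial.coeff_C_mul]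
    refine R.mul_mem hxi ?_
    rw [Polynomial.coeff_sub, Polynomial.coeff_C_mul, Polynomial.finset_sum_coeff]
    refine R.sub_mem ?_ (R.mul_mem hx (Subring.sum_mem R fun j hj => ?_))
    · rw [Polynomial.coeff_X_pow]
      split <;> simp [R.one_mem, R.zero_mem]
    · rw [Polynomial.coeff_C_mul]
      exact R.mul_mem (natCast_mem R _) (ih j (Finset.mem_range.mp hj) i)

lemma auxQ_eval {K : Type*} [Field K] {x : K} (hx : x ≠ 1) (l : ℕ) (t : K) :
    x * (auxQ x l).eval (t + 1) - (auxQ x l).eval t = t ^ l := by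
  induction l using Nat.strong_induction_on generalizing t with
  | _ l ih =>
    have hx' : x - 1 ≠ 0 := sub_ne_zero.mpr hx
    rw [auxQ_def]
    simp only [Polynomial.eval_mul, Polynomial.eval_C, Polynomial.eval_sub, Polynomial.eval_pow,
      Polynomial.eval_X, Polynomial.eval_finset_sum]
    have h1 : x * (∑ j ∈ Finset.range l, (l.choose j : K) * (auxQ x j).eval (t + 1))
        - (∑ j ∈ Finset.range l, (l.choose j : K) * (auxQ x j).eval t)
        = ∑ j ∈ Finset.range l, (l.choose j : K) * t ^ j := by
      rw [Finset.mul_sum, ← Finset.sum_sub_distrib]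
      refine Finset.sum_congr rfl fun j hj => ?_
      rw [← ih j (Finset.mem_range.mp hj) t]; ring
    have h2 : (t + 1) ^ l = t ^ l + ∑ j ∈ Finset.range l, (l.choose j : K) * t ^ j := by
      rw [add_pow]
      rw [Finset.sum_range_succ]
      simp only [Nat.choose_self, Nat.cast_one, one_mul, Nat.sub_self, pow_zero, mul_one, one_pow]
      rw [Finset.sum_congr rfl (fun j _ => mul_comm (t ^ j) ((l.choose j : K)))]
      ring
    have hi : (x - 1) * (x - 1)⁻¹ = 1 := mul_inv_cancel₀ hx'
    linear_combination (-(x-1)⁻¹ * x) * h1 + ((x-1)⁻¹ * x) * h2 + t ^ l * hi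

lemma auxQ_sum {K : Type*} [Field K] {x : K} (hx : x ≠ 1) (l h : ℕ) :
    ∑ u ∈ Finset.range h, x ^ u * (u : K) ^ l
      = (auxQ x l).eval (h : K) * x ^ h - (auxQ x l).eval 0 := by
  induction h with
  | zero => simp
  | succ h ih =>
    rw [Finset.sum_range_succ, ih]
    push_cast
    linear_combination (-(x ^ h)) * auxQ_eval hx l (h : K)

lemma v_nat_le_one {K : Type*} [Field K] (v : AbsoluteValue K ℝ)
    (hna : IsNonarchimedean (⇑v)) (n : ℕ) : v (n : K) ≤ 1 := by
  induction n with
  | zero => simp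
  | succ n ih =>
    push_cast
    exact le_trans (hna _ _) (max_le ih (by simp))

lemma v_int_le_one {K : Type*} [Field K] (v : AbsoluteValue K ℝ)
    (hna : IsNonarchimedean (⇑v)) (n : ℤ) : v (n : K) ≤ 1 := by
  obtain ⟨m, rfl | rfl⟩ := Int.eq_nat_or_neg n
  · exact_mod_cast v_nat_le_one v hna m
  · push_cast
    rw [v.map_neg]
    exact v_nat_le_one v hna m

/-- Base case `r = 1`, `ε ≠ 1`: the coefficients `B_{l',ξ}` of the expansion
`∑_{u=0}^{h-1} ε^{-u} u^l = ∑_{0 ≤ l' ≤ l+1, ξ ∈ μ_c} B_{l',ξ} h^{l'} ξ^h`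
all lie in `ℤ[ε, ε⁻¹, (ε-1)⁻¹]`, hence have `p`-adic valuation `≥ 0`
(absolute value `≤ 1`) for any prime `p ∤ c`. -/
theorem base_case_coefficients_integral {K : Type*} [Field K] [CharZero K]
    (v : AbsoluteValue K ℝ) (hna : IsNonarchimedean (⇑v))
    (p c : ℕ) (hp : p.Prime) (hc : 0 < c) (hpc : ¬ p ∣ c)
    (hvp : v (p : K) = (p : ℝ)⁻¹)
    (ε : K) (hεc : ε ^ c = 1) (hε1 : ε ≠ 1) (l : ℕ) :
    ∃ B : ℕ → K → K,
      (∀ h : ℕ, 0 < h →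
        ∑ u ∈ Finset.range h, ε⁻¹ ^ u * (u : K) ^ l =
          ∑ l' ∈ Finset.range (l + 2), ∑ ξ ∈ Polynomial.nthRootsFinset c (1 : K),
            B l' ξ * (h : K) ^ l' * ξ ^ h) ∧
      (∀ l' ξ, B l' ξ ∈ Subring.closure {ε, ε⁻¹, (ε - 1)⁻¹}) ∧
      (∀ l' ξ, v (B l' ξ) ≤ 1) := by
  classical
  have hε0 : ε ≠ 0 := by
    intro h; rw [h] at hεc; simp [zero_pow hc.ne'] at hεc
  set x : K := ε⁻¹ with hxdef
  have hx1 : x ≠ 1 := by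
    simp only [hxdef, ne_eq, inv_eq_one]; exact hε1
  set R : Subring K := Subring.closure {ε, ε⁻¹, (ε - 1)⁻¹} with hR
  have hεR : ε ∈ R := Subring.subset_closure (by simp)
  have hεiR : ε⁻¹ ∈ R := Subring.subset_closure (by simp)
  have hdR : (ε - 1)⁻¹ ∈ R := Subring.subset_closure (by simp)
  have hxR : x ∈ R := hεiR
  have hximem : (x - 1)⁻¹ ∈ R := by
    have hd0 : ε - 1 ≠ 0 := sub_ne_zero.mpr hε1
    have hval : (x - 1)⁻¹ = -(ε * (ε - 1)⁻¹) := by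
      refine inv_eq_of_mul_eq_one_right ?_
      rw [hxdef]
      field_simp
      ring
    rw [hval]
    exact R.neg_mem (R.mul_mem hεR hdR)
  -- the coefficient function
  set Q : Polynomial K := auxQ x l with hQ
  have hBmem : ∀ (l' : ℕ) (ξ : K), (if ξ = x then Q.coeff l'
      else if ξ = 1 then (if l' = 0 then -(Q.eval 0) else 0) else 0) ∈ R := by
    intro l' ξ
    split
    · exact auxQ_coeff_mem R hxR hximem l l'
    split
    · split
      · refine R.neg_mem ?_
        rw [← Polynomial.coeff_zero_eq_eval_zero]
        exact auxQ_coeff_mem R hxR hximem l 0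
      · exact R.zero_mem
    · exact R.zero_mem
  -- valuation facts
  have hvε : v ε = 1 := by
    have h1 : v ε ^ c = 1 := by rw [← map_pow, hεc, map_one]
    have h0 : 0 ≤ v ε := v.nonneg ε
    have hle : v ε ≤ 1 := by
      by_contra hlt
      push_neg at hlt
      have := one_lt_pow₀ hlt hc.ne'
      linarith
    have hge : 1 ≤ v ε := by
      by_contra hlt
      push_neg at hlt
      have := pow_lt_one₀ h0 hlt hc.ne'
      linarith
    linarith
  have hvεi : v ε⁻¹ = 1 := by rw [map_inv₀, hvε, inv_one]
  have hfin : IsOfFinOrder ε := isOfFinOrder_iff_pow_eq_one.mpr ⟨c, hc, hεc⟩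
  have hddvd : orderOf ε ∣ c := orderOf_dvd_of_pow_eq_one hεc
  have hdpos : 0 < orderOf ε := hfin.orderOf_pos
  have hd1 : orderOf ε ≠ 1 := fun hcon => hε1 (orderOf_eq_one_iff.mp hcon)
  obtain ⟨m, hm⟩ : ∃ m, orderOf ε = m + 2 := ⟨orderOf ε - 2, by omega⟩
  have hprim : IsPrimitiveRoot ε ((m + 1) + 1) := by
    have := IsPrimitiveRoot.orderOf ε
    rwa [hm] at this
  have hprod := hprim.prod_one_sub_pow_eq_order
  -- v (orderOf ε) = 1
  have hpd : ¬ p ∣ orderOf ε := fun hdvd => hpc (hdvd.trans hddvd)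
  have hcop : IsCoprime (p : ℤ) (orderOf ε : ℤ) :=
    Int.isCoprime_iff_gcd_eq_one.mpr (by
      simpa using (Nat.Prime.coprime_iff_not_dvd hp).mpr hpd)
  obtain ⟨a, b, hab⟩ := hcop
  have habK : (a : K) * (p : K) + (b : K) * (orderOf ε : K) = 1 := by
    exact_mod_cast congrArg (fun z : ℤ => (z : K)) hab
  have hvd : v ((orderOf ε : ℕ) : K) = 1 := by
    refine le_antisymm (v_nat_le_one v hna _) ?_
    have hmax : (1 : ℝ) ≤ max (v ((a : K) * (p : K))) (v ((b : K) * (orderOf ε : K))) := by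
      have := hna ((a : K) * (p : K)) ((b : K) * (orderOf ε : K))
      rw [habK, map_one] at this
      exact this
    have hsmall : v ((a : K) * (p : K)) < 1 := by
      rw [map_mul, hvp]
      have h2 : (1 : ℝ) < (p : ℝ) := by exact_mod_cast hp.one_lt
      have hval : v ((a : K)) ≤ 1 := v_int_le_one v hna a
      have hpinv : (p : ℝ)⁻¹ < 1 := by
        rw [inv_lt_one_iff₀]
        right; exact h2
      calc v ((a : K)) * (p : ℝ)⁻¹ ≤ 1 * (p : ℝ)⁻¹ := by
            apply mul_le_mul_of_nonneg_right hval (by positivity)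
        _ < 1 := by simpa using hpinv
    have hbig : (1 : ℝ) ≤ v ((b : K) * (orderOf ε : K)) := by
      rcases max_cases (v ((a : K) * (p : K))) (v ((b : K) * (orderOf ε : K))) with ⟨heq, _⟩ | ⟨heq, _⟩
      · rw [heq] at hmax; linarith
      · rwa [heq] at hmax
    rw [map_mul] at hbig
    have hvb : v ((b : K)) ≤ 1 := v_int_le_one v hna b
    nlinarith [v.nonneg ((b : K)), v.nonneg ((orderOf ε : K) : K)]
  -- each factor of the product is ≤ 1
  have hfact : ∀ k : ℕ, v (1 - ε ^ (k + 1)) ≤ 1 := by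
    intro k
    have hpow : v (ε ^ (k + 1)) = 1 := by rw [map_pow, hvε, one_pow]
    calc v (1 - ε ^ (k + 1)) = v (1 + -(ε ^ (k + 1))) := by rw [sub_eq_add_neg]
      _ ≤ max (v 1) (v (-(ε ^ (k + 1)))) := hna _ _
      _ ≤ 1 := by rw [map_one, v.map_neg, hpow]; simp
  -- hence v (1 - ε) = 1 and v ((ε - 1)⁻¹) ≤ 1
  have h1ε : 1 ≤ v (1 - ε) := by
    have hvprod : v (1 - ε) * ∏ k ∈ Finset.range m, v (1 - ε ^ (k + 1 + 1)) = 1 := by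
      have := congrArg v hprod
      rw [map_prod] at this
      rw [Finset.prod_range_succ'] at this
      rw [mul_comm] at this
      rw [pow_one] at this
      rw [this]
      have h2 : (((m + 1 : ℕ) : K) + 1) = (((orderOf ε : ℕ) : K)) := by
        rw [hm]; push_cast; ring
      rw [h2, hvd]
    have hP1 : ∏ k ∈ Finset.range m, v (1 - ε ^ (k + 1 + 1)) ≤ 1 :=
      Finset.prod_le_one (fun k _ => v.nonneg _) (fun k _ => hfact (k + 1))
    nlinarith [v.nonneg (1 - ε)]
  have hvinv : v ((ε - 1)⁻¹) ≤ 1 := by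
    rw [map_inv₀, v.map_sub]
    exact inv_le_one_of_one_le₀ h1ε
  -- the closed unit ball is a subring
  let S : Subring K :=
    { carrier := {y | v y ≤ 1}
      mul_mem' := fun {y z} hy hz => by
        simp only [Set.mem_setOf_eq, map_mul] at *
        exact mul_le_one₀ hy (v.nonneg z) hz
      one_mem' := by simp [Set.mem_setOf_eq]
      add_mem' := fun {y z} hy hz => le_trans (hna y z) (max_le hy hz)
      zero_mem' := by simp [Set.mem_setOf_eq]
      neg_mem' := fun {y} hy => by simpa [v.map_neg] using hy }
  have hRS : R ≤ S := by
    rw [hR]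
    refine Subring.closure_le.mpr ?_
    intro y hy
    simp only [Set.mem_insert_iff, Set.mem_singleton_iff] at hy
    rcases hy with rfl | rfl | rfl
    · exact hvε.le
    · exact hvεi.le
    · exact hvinv
  refine ⟨fun l' ξ => if ξ = x then Q.coeff l'
      else if ξ = 1 then (if l' = 0 then -(Q.eval 0) else 0) else 0,
      ?_, hBmem, fun l' ξ => hRS (hBmem l' ξ)⟩
  intro h hh
  dsimp only
  have hxmem : x ∈ Polynomial.nthRootsFinset c (1 : K) := by
    rw [Polynomial.mem_nthRootsFinset hc, hxdef, inv_pow, hεc, inv_one]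
  have h1mem : (1 : K) ∈ Polynomial.nthRootsFinset c (1 : K) := by
    rw [Polynomial.mem_nthRootsFinset hc, one_pow]
  rw [auxQ_sum hx1 l h]
  have hinner : ∀ l' ∈ Finset.range (l + 2),
      (∑ ξ ∈ Polynomial.nthRootsFinset c (1 : K),
        (if ξ = x then Q.coeff l' else if ξ = 1 then (if l' = 0 then -(Q.eval 0) else 0) else 0)
          * (h : K) ^ l' * ξ ^ h)
      = Q.coeff l' * (h : K) ^ l' * x ^ h
          + (if l' = 0 then -(Q.eval 0) else 0) * (h : K) ^ l' := by
    intro l' _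
    rw [← Finset.sum_subset (s₁ := {x, 1}) ?_ ?_]
    · rw [Finset.sum_pair hx1]
      simp [hx1, Ne.symm hx1]
    · intro ξ hξ
      simp only [Finset.mem_insert, Finset.mem_singleton] at hξ
      rcases hξ with rfl | rfl
      · exact hxmem
      · exact h1mem
    · intro ξ hξ hnot
      simp only [Finset.mem_insert, Finset.mem_singleton, not_or] at hnot
      simp [hnot.1, hnot.2]
  rw [Finset.sum_congr rfl hinner, Finset.sum_add_distrib]
  have hdeg : Q.natDegree < l + 2 := lt_of_le_of_lt (auxQ_natDegree_le x l) (by omega)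
  have heval : Q.eval (h : K) = ∑ l' ∈ Finset.range (l + 2), Q.coeff l' * (h : K) ^ l' :=
    Polynomial.eval_eq_sum_range' hdeg _
  have hsum1 : ∑ l' ∈ Finset.range (l + 2), Q.coeff l' * (h : K) ^ l' * x ^ h
      = Q.eval (h : K) * x ^ h := by
    rw [heval, Finset.sum_mul]
  have hsum2 : ∑ l' ∈ Finset.range (l + 2),
      (if l' = 0 then -(Q.eval 0) else 0) * (h : K) ^ l' = -(Q.eval 0) := by
    rw [Finset.sum_eq_single 0]
    · simp
    · intro b _ hb; simp [hb]
    · intro habs; simp at habs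
  rw [hsum1, hsum2]
  ring
end
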